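/- Generalized score matching partial-integration identity in one dimension: if h, h* are positive differentiable densities on (0,∞), v : (0,∞) → (0,∞) is differentiable, and lim_{z→0⁺} h*(z)v(z)(log h)'(z) = lim_{z→∞} h*(z)v(z)(log h)'(z) = 0, with all integrals finite, then ∫ v(z)(log h)'(z)(log h*)'(z) h*(z)dz = −∫ [v'(z)(log h)'(z) + v(z)(log h)''(z)] h*(z)dz. -/

import Mathlib

open MeasureTheory Set Filter

/-- Generalized score matching partial-integration identity in one dimension:
under vanishing boundary terms and integrability,
`∫ v (log h)' (log h*)' h* = −∫ [v' (log h)' + v (log h)''] h*` on `(0,∞)`. -/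
theorem gsm_partial_integration (h hstar v : ℝ → ℝ)
    (hpos : ∀ z ∈ Ioi (0 : ℝ), 0 < h z)
    (hspos : ∀ z ∈ Ioi (0 : ℝ), 0 < hstar z)
    (hvpos : ∀ z ∈ Ioi (0 : ℝ), 0 < v z)
    (hh : ContDiffOn ℝ 2 h (Ioi 0)) (hhs : ContDiffOn ℝ 2 hstar (Ioi 0))
    (hv : ContDiffOn ℝ 1 v (Ioi 0))
    (hnorm : ∫ z in Ioi (0 : ℝ), hstar z = 1)
    (hb0 : Tendsto (fun z => hstar z * v z * deriv (fun t => Real.log (h t)) z)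
      (nhdsWithin 0 (Ioi 0)) (nhds 0))
    (hbinf : Tendsto (fun z => hstar z * v z * deriv (fun t => Real.log (h t)) z)
      atTop (nhds 0))
    (hint1 : IntegrableOn (fun z =>
      v z * deriv (fun t => Real.log (h t)) z
        * deriv (fun t => Real.log (hstar t)) z * hstar z) (Ioi 0))
    (hint2 : IntegrableOn (fun z =>
      (deriv v z * deriv (fun t => Real.log (h t)) z
        + v z * deriv (deriv (fun t => Real.log (h t))) z) * hstar z) (Ioi 0)) :
    (∫ z in Ioi (0 : ℝ), v z * deriv (fun t => Real.log (h t)) z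
        * deriv (fun t => Real.log (hstar t)) z * hstar z)
      = -∫ z in Ioi (0 : ℝ),
          (deriv v z * deriv (fun t => Real.log (h t)) z
            + v z * deriv (deriv (fun t => Real.log (h t))) z) * hstar z := by
  -- abbreviations
  have hlogh : ContDiffOn ℝ 2 (fun t => Real.log (h t)) (Ioi 0) :=
    hh.log (fun z hz => (hpos z hz).ne')
  have hLdiff : DifferentiableOn ℝ (deriv (fun t => Real.log (h t))) (Ioi 0) :=
    (hlogh.deriv_of_isOpen (m := 1) isOpen_Ioi (by norm_num)).differentiableOn one_ne_zero
  set F : ℝ → ℝ := fun z => hstar z * v z * deriv (fun t => Real.log (h t)) z with hFdef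
  set G : ℝ → ℝ := fun z =>
      v z * deriv (fun t => Real.log (h t)) z
        * deriv (fun t => Real.log (hstar t)) z * hstar z
      + (deriv v z * deriv (fun t => Real.log (h t)) z
        + v z * deriv (deriv (fun t => Real.log (h t))) z) * hstar z with hGdef
  have key : ∀ z ∈ Ioi (0 : ℝ), HasDerivAt F (G z) z := by
    intro z hz
    have hmem : Ioi (0 : ℝ) ∈ nhds z := Ioi_mem_nhds hz
    have hdhs : HasDerivAt hstar (deriv hstar z) z :=
      (((hhs.differentiableOn (by norm_num)).differentiableAt hmem)).hasDerivAt
    have hdv : HasDerivAt v (deriv v z) z :=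
      (((hv.differentiableOn one_ne_zero).differentiableAt hmem)).hasDerivAt
    have hdL : HasDerivAt (deriv (fun t => Real.log (h t)))
        (deriv (deriv (fun t => Real.log (h t))) z) z :=
      (hLdiff.differentiableAt hmem).hasDerivAt
    have hls : deriv (fun t => Real.log (hstar t)) z = deriv hstar z / hstar z :=
      (hdhs.log (hspos z hz).ne').deriv
    have hne : hstar z ≠ 0 := (hspos z hz).ne'
    have := (hdhs.mul hdv).mul hdL
    refine HasDerivAt.congr_deriv (f := F) this ?_
    simp only [hGdef, hls, Pi.mul_apply]
    field_simp
    ring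
  have hcontF1 : ContinuousAt F 1 := (key 1 (by norm_num)).continuousAt
  have hG : IntegrableOn G (Ioi 0) := hint1.add hint2
  -- integral over (1, ∞)
  have h1 : ∫ z in Ioi (1 : ℝ), G z = 0 - F 1 := by
    refine integral_Ioi_of_hasDerivAt_of_tendsto hcontF1.continuousWithinAt
      (fun x hx => key x (mem_Ioi.2 (lt_trans one_pos (mem_Ioi.1 hx))))
      (hG.mono_set (Ioi_subset_Ioi (by norm_num))) hbinf
  -- integral over (0, 1]
  have h2 : ∫ z in Ioc (0 : ℝ) 1, G z = F 1 - 0 := by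
    have hii : IntervalIntegrable G volume 0 1 := by
      rw [intervalIntegrable_iff_integrableOn_Ioc_of_le zero_le_one]
      exact hG.mono_set Ioc_subset_Ioi_self
    have := intervalIntegral.integral_eq_sub_of_hasDerivAt_of_tendsto zero_lt_one
      (fun x hx => key x hx.1) hii hb0
      (hcontF1.tendsto.mono_left nhdsWithin_le_nhds)
    rw [← this, intervalIntegral.integral_of_le zero_le_one]
  -- combine
  have hsplit : (∫ z in Ioi (0 : ℝ), G z)
      = (∫ z in Ioc (0 : ℝ) 1, G z) + ∫ z in Ioi (1 : ℝ), G z := by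
    rw [← setIntegral_union (Ioc_disjoint_Ioi le_rfl) measurableSet_Ioi
      (hG.mono_set Ioc_subset_Ioi_self) (hG.mono_set (Ioi_subset_Ioi (by norm_num))),
      Ioc_union_Ioi_eq_Ioi zero_le_one]
  have hzero : (∫ z in Ioi (0 : ℝ), G z) = 0 := by
    rw [hsplit, h1, h2]; ring
  have hzero2 : (∫ z in Ioi (0 : ℝ),
      (v z * deriv (fun t => Real.log (h t)) z
        * deriv (fun t => Real.log (hstar t)) z * hstar z
      + (deriv v z * deriv (fun t => Real.log (h t)) z
        + v z * deriv (deriv (fun t => Real.log (h t))) z) * hstar z)) = 0 := hzero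
  rw [integral_add hint1 hint2] at hzero2
  linarith
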